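/- Let P be a finitely generated torsion-free commutative cancellative monoid embedded in V = ℚ ⊗ P^gp, and C(P) the cone it generates. If F is a face of P, then P ∩ C(F) = F; and if G is a face of C(P), then C(P ∩ G) = G. Hence F ↦ C(F) is a bijection between faces of P and faces of C(P). -/

import Mathlib

/-- The rational cone `C(X)` generated by a subset `X` of a `ℚ`-vector space: all finite
nonnegative rational combinations of elements of `X`. -/
def rationalCone {V : Type*} [AddCommGroup V] [Module ℚ V] (X : Set V) : Set V :=
  {v | ∃ (n : ℕ) (q : Fin n → ℚ) (p : Fin n → V),
    (∀ i, 0 ≤ q i) ∧ (∀ i, p i ∈ X) ∧ v = ∑ i, q i • p i}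

/-- `F` is a face of the monoid `P`: a submonoid such that `p + p' ∈ F` implies `p ∈ F`. -/
def IsMonoidFace {V : Type*} [AddCommGroup V] [Module ℚ V] (P F : AddSubmonoid V) : Prop :=
  F ≤ P ∧ ∀ p ∈ P, ∀ q ∈ P, p + q ∈ F → p ∈ F

/-- `G` is a face of the cone `C`: a subcone (containing `0`, closed under addition and
nonnegative rational scaling) such that `x + y ∈ G` with `x, y ∈ C` implies `x ∈ G`. -/
def IsConeFace {V : Type*} [AddCommGroup V] [Module ℚ V] (C G : Set V) : Prop :=
  G ⊆ C ∧ (0 : V) ∈ G ∧ (∀ x ∈ G, ∀ y ∈ G, x + y ∈ G) ∧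
    (∀ (q : ℚ), 0 ≤ q → ∀ x ∈ G, q • x ∈ G) ∧
    ∀ x ∈ C, ∀ y ∈ C, x + y ∈ G → x ∈ G

section Aux

variable {V : Type*} [AddCommGroup V] [Module ℚ V]

lemma cone_zero (X : Set V) : (0 : V) ∈ rationalCone X :=
  ⟨0, finZeroElim, finZeroElim, fun i => i.elim0, fun i => i.elim0, by simp⟩

lemma cone_single {X : Set V} {q : ℚ} (hq : 0 ≤ q) {x : V} (hx : x ∈ X) :
    q • x ∈ rationalCone X :=
  ⟨1, fun _ => q, fun _ => x, fun _ => hq, fun _ => hx, by simp⟩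

lemma cone_add {X : Set V} {x y : V} (hx : x ∈ rationalCone X) (hy : y ∈ rationalCone X) :
    x + y ∈ rationalCone X := by
  obtain ⟨n, q, p, hq, hp, rfl⟩ := hx
  obtain ⟨m, r, s, hr, hs, rfl⟩ := hy
  refine ⟨n + m, Fin.append q r, Fin.append p s, ?_, ?_, ?_⟩
  · intro i
    rcases Nat.lt_or_ge i.1 n with h | h
    · simpa [Fin.append, Fin.addCases, Fin.castLT, h] using hq ⟨i, h⟩
    · simpa [Fin.append, Fin.addCases, Fin.subNat, Fin.cast, Nat.not_lt.mpr h] using hr ⟨i - n, by omega⟩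
  · intro i
    rcases Nat.lt_or_ge i.1 n with h | h
    · simpa [Fin.append, Fin.addCases, Fin.castLT, h] using hp ⟨i, h⟩
    · simpa [Fin.append, Fin.addCases, Fin.subNat, Fin.cast, Nat.not_lt.mpr h] using hs ⟨i - n, by omega⟩
  · rw [Fin.sum_univ_add]
    simp

lemma cone_sum {X : Set V} {ι : Type*} (s : Finset ι) (q : ι → ℚ) (p : ι → V)
    (hq : ∀ i ∈ s, 0 ≤ q i) (hp : ∀ i ∈ s, p i ∈ X) :
    (∑ i ∈ s, q i • p i) ∈ rationalCone X := by
  classical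
  induction s using Finset.induction with
  | empty => simpa using cone_zero X
  | insert _ _ h ih =>
    rw [Finset.sum_insert h]
    exact cone_add (cone_single (hq _ (Finset.mem_insert_self _ _))
        (hp _ (Finset.mem_insert_self _ _)))
      (ih (fun i hi => hq i (Finset.mem_insert_of_mem hi))
        (fun i hi => hp i (Finset.mem_insert_of_mem hi)))

end Aux

/-- Let `P` be a finitely generated torsion-free commutative cancellative monoid embedded in
`V = ℚ ⊗ P^gp`, and `C(P)` the cone it generates. If `F` is a face of `P` then
`P ∩ C(F) = F`, and if `G` is a face of `C(P)` then `C(P ∩ G) = G`. Hence `F ↦ C(F)` is a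
bijection between the faces of `P` and the faces of `C(P)`. -/
theorem faces_of_monoid_biject_faces_of_cone {V : Type*} [AddCommGroup V] [Module ℚ V]
    (P : AddSubmonoid V) (hfg : P.FG)
    (hspan : Submodule.span ℚ (P : Set V) = ⊤) :
    (∀ F : AddSubmonoid V, IsMonoidFace P F →
      (P : Set V) ∩ rationalCone (F : Set V) = (F : Set V)) ∧
    (∀ G : Set V, IsConeFace (rationalCone (P : Set V)) G →
      rationalCone ((P : Set V) ∩ G) = G) := by
  classical
  constructor
  · intro F hF
    apply Set.Subset.antisymm
    · rintro x ⟨hxP, n, q, p, hq, hp, rfl⟩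
      set x := ∑ i, q i • p i with hx
      -- clear denominators
      set d : ℕ := ∏ i, (q i).den with hd
      have hden : ∀ i, (q i).den ∣ d := fun i => Finset.dvd_prod_of_mem _ (Finset.mem_univ i)
      have hdpos : 0 < d := Finset.prod_pos (fun i _ => (q i).pos)
      -- d • x ∈ F
      set m : Fin n → ℕ := fun i => (d / (q i).den) * (q i).num.toNat with hm
      have hcast : ∀ i, ((m i : ℚ)) = (d : ℚ) * q i := by
        intro i
        have h1 : ((d / (q i).den : ℕ) : ℚ) * ((q i).den : ℚ) = (d : ℚ) := by
          rw [← Nat.cast_mul, Nat.div_mul_cancel (hden i)]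
        have h2 : (((q i).num.toNat : ℕ) : ℚ) = ((q i).num : ℚ) := by
          rw [← Int.cast_natCast, Int.toNat_of_nonneg (Rat.num_nonneg.mpr (hq i))]
        have h3 : ((q i).den : ℚ) ≠ 0 := by exact_mod_cast (q i).den_nz
        have h5 : ((q i).num : ℚ) = q i * ((q i).den : ℚ) :=
          (div_eq_iff h3).mp (Rat.num_div_den (q i))
        have hml : ((m i : ℚ)) = ((d / (q i).den : ℕ) : ℚ) * ((q i).num : ℚ) := by
          rw [hm]; push_cast [h2]; ring
        rw [hml, h5, ← h1]
        ring
      have hdx : d • x ∈ F := by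
        have : d • x = ∑ i, m i • p i := by
          rw [← Nat.cast_smul_eq_nsmul ℚ d x, hx, Finset.smul_sum]
          refine Finset.sum_congr rfl (fun i _ => ?_)
          rw [smul_smul, ← hcast i, Nat.cast_smul_eq_nsmul]
        rw [this]
        exact F.sum_mem (fun i _ => F.nsmul_mem (hp i) _)
      -- face property: x + (d-1) • x = d • x ∈ F
      have : x + (d - 1) • x ∈ F := by
        have : x + (d - 1) • x = d • x := by
          rw [add_comm, ← succ_nsmul x (d - 1), Nat.sub_add_cancel hdpos]
        rwa [this]
      exact hF.2 x hxP ((d - 1) • x) (P.nsmul_mem hxP _) this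
    · intro x hx
      refine ⟨hF.1 hx, ?_⟩
      simpa using cone_single (zero_le_one (α := ℚ)) hx
  · intro G hG
    obtain ⟨hGC, hG0, hGadd, hGsmul, hGface⟩ := hG
    apply Set.Subset.antisymm
    · rintro x ⟨n, q, p, hq, hp, rfl⟩
      refine Finset.sum_induction _ (· ∈ G) (fun a b ha hb => hGadd a ha b hb) hG0 ?_
      intro i _
      exact hGsmul (q i) (hq i) (p i) (hp i).2
    · intro g hgG
      obtain ⟨n, q, p, hq, hp, hgeq⟩ := hGC hgG
      -- each p i with q i ≠ 0 lies in G
      have key : ∀ i, q i ≠ 0 → p i ∈ G := by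
        intro i hqi
        have hsplit := Finset.add_sum_erase Finset.univ (fun j => q j • p j) (Finset.mem_univ i)
        have h1 : q i • p i + ∑ j ∈ Finset.univ.erase i, q j • p j ∈ G := by
          rw [hsplit, ← hgeq]
          exact hgG
        have h2 : q i • p i ∈ rationalCone (P : Set V) := cone_single (hq i) (hp i)
        have h3 : (∑ j ∈ Finset.univ.erase i, q j • p j) ∈ rationalCone (P : Set V) :=
          cone_sum _ _ _ (fun j _ => hq j) (fun j _ => hp j)
        have h4 : q i • p i ∈ G := hGface _ h2 _ h3 h1
        have h5 : (q i)⁻¹ • (q i • p i) ∈ G :=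
          hGsmul _ (inv_nonneg.mpr (hq i)) _ h4
        rwa [smul_smul, inv_mul_cancel₀ hqi, one_smul] at h5
      set p' : Fin n → V := fun i => if q i = 0 then 0 else p i with hp'
      refine ⟨n, q, p', fun i => hq i, ?_, ?_⟩
      · intro i
        by_cases h : q i = 0
        · simp [hp', h]
          exact hG0
        · simp [hp', h]
          exact ⟨hp i, key i h⟩
      · rw [hgeq]
        refine Finset.sum_congr rfl (fun i _ => ?_)
        by_cases h : q i = 0 <;> simp [hp', h]
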